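/- For every real θ, ‖Â₀(θ)Â₁(θ)Â₀(θ)‖₁ = ‖Â₁(θ)Â₀(θ)Â₁(θ)‖₁ = (1 + √(5 + 4cos θ))/4. -/

import Mathlib

open Complex

noncomputable def A0 (θ : ℝ) : Matrix (Fin 2) (Fin 2) ℂ :=
  !![1, (1 / 2) * Complex.exp (-Complex.I * θ);
     0, (1 / 2) * Complex.exp (Complex.I * θ)]

noncomputable def A1 (θ : ℝ) : Matrix (Fin 2) (Fin 2) ℂ :=
  !![(1 / 2) * Complex.exp (-Complex.I * θ), 0;
     (1 / 2) * Complex.exp (Complex.I * θ), 1]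

/-- The maximum column sum of absolute values of a 2×2 complex matrix. -/
noncomputable def colNorm (Y : Matrix (Fin 2) (Fin 2) ℂ) : ℝ :=
  max (‖Y 0 0‖ + ‖Y 1 0‖)
      (‖Y 0 1‖ + ‖Y 1 1‖)

lemma prod010 (θ : ℝ) : A0 θ * A1 θ * A0 θ =
    !![Complex.exp (-(Complex.I * θ))/2 + 1/4,
       Complex.exp (-(Complex.I * θ)) * (4*(Real.cos θ:ℂ) + 1)/8;
       Complex.exp (Complex.I * θ)^2/4,
       Complex.exp (Complex.I * θ)/8 + Complex.exp (Complex.I * θ)^2/4] := by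
  have h : Complex.exp (-(Complex.I * θ)) * Complex.exp (Complex.I * θ) = 1 := by
    rw [← Complex.exp_add]; ring_nf; exact Complex.exp_zero
  have hc : (Real.cos θ : ℂ) = (Complex.exp (Complex.I * θ) + Complex.exp (-(Complex.I * θ)))/2 := by
    rw [Complex.ofReal_cos, Complex.cos, mul_comm]; ring_nf
  ext i j
  fin_cases i <;> fin_cases j <;>
    simp only [A0, A1, Matrix.mul_fin_two, neg_mul, hc, Matrix.cons_val', Matrix.cons_val_zero,
      Matrix.cons_val_one, Matrix.head_cons, Matrix.head_fin_const, Matrix.cons_val_fin_one,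
      Matrix.empty_val', Fin.isValue, Fin.zero_eta, Fin.mk_one, Matrix.of_apply]
  · linear_combination (1/4 : ℂ) * h
  · linear_combination (Complex.exp (-(Complex.I * θ))/8) * h
  · ring
  · linear_combination (Complex.exp (Complex.I * θ)/8) * h

lemma prod101 (θ : ℝ) : A1 θ * A0 θ * A1 θ =
    !![Complex.exp (-(Complex.I * θ))^2/4 + Complex.exp (-(Complex.I * θ))/8,
       Complex.exp (-(Complex.I * θ))^2/4;
       Complex.exp (Complex.I * θ) * (4*(Real.cos θ:ℂ) + 1)/8,
       Complex.exp (Complex.I * θ)/2 + 1/4] := by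
  have h : Complex.exp (-(Complex.I * θ)) * Complex.exp (Complex.I * θ) = 1 := by
    rw [← Complex.exp_add]; ring_nf; exact Complex.exp_zero
  have hc : (Real.cos θ : ℂ) = (Complex.exp (Complex.I * θ) + Complex.exp (-(Complex.I * θ)))/2 := by
    rw [Complex.ofReal_cos, Complex.cos, mul_comm]; ring_nf
  ext i j
  fin_cases i <;> fin_cases j <;>
    simp only [A0, A1, Matrix.mul_fin_two, neg_mul, hc, Matrix.cons_val', Matrix.cons_val_zero,
      Matrix.cons_val_one, Matrix.head_cons, Matrix.head_fin_const, Matrix.cons_val_fin_one,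
      Matrix.empty_val', Fin.isValue, Fin.zero_eta, Fin.mk_one, Matrix.of_apply]
  · linear_combination (Complex.exp (-(Complex.I * θ))/8) * h
  · ring
  · linear_combination (Complex.exp (Complex.I * θ)/8) * h
  · linear_combination (1/4 : ℂ) * h


lemma expI (θ : ℝ) : Complex.exp (Complex.I * θ) = (Real.cos θ : ℂ) + (Real.sin θ : ℂ) * Complex.I := by
  rw [mul_comm, Complex.exp_mul_I, Complex.ofReal_cos, Complex.ofReal_sin]

lemma expI' (θ : ℝ) : Complex.exp (-(Complex.I * θ)) = (Real.cos θ : ℂ) - (Real.sin θ : ℂ) * Complex.I := by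
  rw [show -(Complex.I * θ) = Complex.I * (-θ:ℝ) by push_cast; ring, expI]
  simp
  ring

lemma sqrt16 : Real.sqrt 16 = 4 := by
  rw [show (16:ℝ) = 4^2 by norm_num, Real.sqrt_sq (by norm_num)]

lemma h5 (θ : ℝ) : (0:ℝ) ≤ 5 + 4 * Real.cos θ := by nlinarith [Real.neg_one_le_cos θ]

lemma abs1 (θ : ℝ) : ‖Complex.exp (-(Complex.I * θ))/2 + 1/4‖
    = Real.sqrt (5 + 4 * Real.cos θ) / 4 := by
  rw [show Complex.exp (-(Complex.I * θ))/2 + 1/4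
      = ((Real.cos θ/2 + 1/4 : ℝ):ℂ) + ((-(Real.sin θ/2) : ℝ):ℂ) * Complex.I by
    rw [expI']; push_cast; ring]
  rw [Complex.norm_add_mul_I,
    show (Real.cos θ/2 + 1/4)^2 + (-(Real.sin θ/2))^2 = (5 + 4*Real.cos θ)/16 by
      nlinarith [Real.sin_sq_add_cos_sq θ],
    Real.sqrt_div (h5 θ), sqrt16]

lemma abs1' (θ : ℝ) : ‖Complex.exp (Complex.I * θ)/2 + 1/4‖
    = Real.sqrt (5 + 4 * Real.cos θ) / 4 := by
  rw [show Complex.exp (Complex.I * θ)/2 + 1/4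
      = ((Real.cos θ/2 + 1/4 : ℝ):ℂ) + ((Real.sin θ/2 : ℝ):ℂ) * Complex.I by
    rw [expI]; push_cast; ring]
  rw [Complex.norm_add_mul_I,
    show (Real.cos θ/2 + 1/4)^2 + (Real.sin θ/2)^2 = (5 + 4*Real.cos θ)/16 by
      nlinarith [Real.sin_sq_add_cos_sq θ],
    Real.sqrt_div (h5 θ), sqrt16]

lemma absexp (θ : ℝ) : ‖Complex.exp (Complex.I * θ)‖ = 1 := by
  rw [expI, Complex.norm_add_mul_I]
  rw [Real.sin_sq_add_cos_sq θ |> fun h => show Real.cos θ^2 + Real.sin θ^2 = 1 by linarith]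
  exact Real.sqrt_one

lemma absexp' (θ : ℝ) : ‖Complex.exp (-(Complex.I * θ))‖ = 1 := by
  rw [expI']
  rw [show (Real.cos θ : ℂ) - (Real.sin θ : ℂ) * Complex.I
      = ((Real.cos θ : ℝ):ℂ) + ((-Real.sin θ : ℝ):ℂ) * Complex.I by push_cast; ring]
  rw [Complex.norm_add_mul_I]
  rw [show Real.cos θ^2 + (-Real.sin θ)^2 = 1 by nlinarith [Real.sin_sq_add_cos_sq θ]]
  exact Real.sqrt_one

lemma abs2 (θ : ℝ) : ‖Complex.exp (-(Complex.I * θ)) * (4*(Real.cos θ:ℂ) + 1)/8‖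
    = |4 * Real.cos θ + 1| / 8 := by
  rw [norm_div, norm_mul, absexp', one_mul,
    show (4*(Real.cos θ:ℂ) + 1) = ((4*Real.cos θ + 1 : ℝ):ℂ) by push_cast; ring,
    Complex.norm_real]
  simp

lemma abs2' (θ : ℝ) : ‖Complex.exp (Complex.I * θ) * (4*(Real.cos θ:ℂ) + 1)/8‖
    = |4 * Real.cos θ + 1| / 8 := by
  rw [norm_div, norm_mul, absexp, one_mul,
    show (4*(Real.cos θ:ℂ) + 1) = ((4*Real.cos θ + 1 : ℝ):ℂ) by push_cast; ring,
    Complex.norm_real]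
  simp

lemma abs3 (θ : ℝ) : ‖Complex.exp (Complex.I * θ)^2/4‖ = 1/4 := by
  rw [norm_div, norm_pow, absexp]; simp

lemma abs3' (θ : ℝ) : ‖Complex.exp (-(Complex.I * θ))^2/4‖ = 1/4 := by
  rw [norm_div, norm_pow, absexp']; simp

lemma abs4 (θ : ℝ) : ‖Complex.exp (Complex.I * θ)/8 + Complex.exp (Complex.I * θ)^2/4‖
    = Real.sqrt (5 + 4 * Real.cos θ) / 8 := by
  rw [show Complex.exp (Complex.I * θ)/8 + Complex.exp (Complex.I * θ)^2/4
      = Complex.exp (Complex.I * θ) * (1/8 + Complex.exp (Complex.I * θ)/4) by ring,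
    norm_mul, absexp, one_mul]
  rw [show (1:ℂ)/8 + Complex.exp (Complex.I * θ)/4
      = ((1/8 + Real.cos θ/4 : ℝ):ℂ) + ((Real.sin θ/4 : ℝ):ℂ) * Complex.I by
    rw [expI]; push_cast; ring]
  rw [Complex.norm_add_mul_I,
    show (1/8 + Real.cos θ/4)^2 + (Real.sin θ/4)^2 = (5 + 4*Real.cos θ)/64 by
      nlinarith [Real.sin_sq_add_cos_sq θ],
    Real.sqrt_div (h5 θ),
    show Real.sqrt 64 = 8 by rw [show (64:ℝ) = 8^2 by norm_num, Real.sqrt_sq (by norm_num)]]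

lemma abs4' (θ : ℝ) : ‖Complex.exp (-(Complex.I * θ))^2/4 + Complex.exp (-(Complex.I * θ))/8‖
    = Real.sqrt (5 + 4 * Real.cos θ) / 8 := by
  rw [show Complex.exp (-(Complex.I * θ))^2/4 + Complex.exp (-(Complex.I * θ))/8
      = Complex.exp (-(Complex.I * θ)) * (1/8 + Complex.exp (-(Complex.I * θ))/4) by ring,
    norm_mul, absexp', one_mul]
  rw [show (1:ℂ)/8 + Complex.exp (-(Complex.I * θ))/4
      = ((1/8 + Real.cos θ/4 : ℝ):ℂ) + ((-(Real.sin θ/4) : ℝ):ℂ) * Complex.I by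
    rw [expI']; push_cast; ring]
  rw [Complex.norm_add_mul_I,
    show (1/8 + Real.cos θ/4)^2 + (-(Real.sin θ/4))^2 = (5 + 4*Real.cos θ)/64 by
      nlinarith [Real.sin_sq_add_cos_sq θ],
    Real.sqrt_div (h5 θ),
    show Real.sqrt 64 = 8 by rw [show (64:ℝ) = 8^2 by norm_num, Real.sqrt_sq (by norm_num)]]

lemma key_ineq (θ : ℝ) : |4 * Real.cos θ + 1| ≤ 2 + Real.sqrt (5 + 4 * Real.cos θ) := by
  have hs := Real.sq_sqrt (h5 θ)
  have hs0 := Real.sqrt_nonneg (5 + 4 * Real.cos θ)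
  have hc1 := Real.cos_le_one θ
  have hc2 := Real.neg_one_le_cos θ
  rw [abs_le]
  constructor
  · nlinarith [sq_nonneg (Real.sqrt (5 + 4 * Real.cos θ) - 1)]
  · nlinarith [sq_nonneg (Real.sqrt (5 + 4 * Real.cos θ) - 3),
      mul_nonneg (sub_nonneg.2 hc1) hs0]

theorem colNorm_triple_products (θ : ℝ) :
    colNorm (A0 θ * A1 θ * A0 θ) = (1 + Real.sqrt (5 + 4 * Real.cos θ)) / 4 ∧
    colNorm (A1 θ * A0 θ * A1 θ) = (1 + Real.sqrt (5 + 4 * Real.cos θ)) / 4 := by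
  have hkey := key_ineq θ
  constructor
  · rw [prod010, colNorm]
    simp only [Matrix.cons_val', Matrix.cons_val_zero, Matrix.cons_val_one, Matrix.head_cons,
      Matrix.head_fin_const, Matrix.empty_val', Matrix.cons_val_fin_one, Matrix.of_apply]
    rw [abs1, abs3, abs2, abs4, max_eq_left (by linarith)]
    ring
  · rw [prod101, colNorm]
    simp only [Matrix.cons_val', Matrix.cons_val_zero, Matrix.cons_val_one, Matrix.head_cons,
      Matrix.head_fin_const, Matrix.empty_val', Matrix.cons_val_fin_one, Matrix.of_apply]
    rw [abs4', abs2', abs3', abs1', max_eq_right (by linarith)]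
    ring
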